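/- In the reduction from 3SAT, S is satisfiable if and only if there is a stable model M of P₂ compatible with the stable model {d,e} of P₁; consequently, since no stable model of P₁ ⊕ P₂ contains d or e, S is unsatisfiable iff SM(P₁ ⊕ P₂) = SM(P₁) ⋈ SM(P₂). -/

import Mathlib

/-- A normal rule `head ← pos, not neg`. -/
structure NRule where
  head : ℕ
  pos : Set ℕ
  neg : Set ℕ

def NRule.atoms (r : NRule) : Set ℕ := {r.head} ∪ r.pos ∪ r.neg

/-- A normal logic program module `⟨R, I, O, H⟩`. -/
structure NMod where
  R : Set NRule
  I : Set ℕ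
  O : Set ℕ
  H : Set ℕ

def NMod.hb (P : NMod) : Set ℕ := P.I ∪ P.O ∪ P.H

def NMod.vis (P : NMod) : Set ℕ := P.I ∪ P.O

/-- Well-formedness of a module: `I`, `O`, `H` pairwise disjoint, atoms of the
rules contained in `I ∪ O ∪ H`, and no rule head in `I`. -/
def NMod.wf (P : NMod) : Prop :=
  P.I ∩ P.O = ∅ ∧ P.I ∩ P.H = ∅ ∧ P.O ∩ P.H = ∅ ∧
  (∀ r ∈ P.R, r.atoms ⊆ P.hb) ∧ (∀ r ∈ P.R, r.head ∉ P.I)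

/-- Edge of the positive dependency graph: `a` depends directly on `b`. -/
def ndepEdge (R : Set NRule) (b a : ℕ) : Prop := ∃ r ∈ R, r.head = a ∧ b ∈ r.pos

def ndep (R : Set NRule) : ℕ → ℕ → Prop := Relation.ReflTransGen (ndepEdge R)

/-- The composition `P₁ ⊕ P₂` (also used as underlying operation of the join `⊔`). -/
def NMod.comp (P₁ P₂ : NMod) : NMod :=
  ⟨P₁.R ∪ P₂.R, (P₁.I \ P₂.O) ∪ (P₂.I \ P₁.O), P₁.O ∪ P₂.O, P₁.H ∪ P₂.H⟩

/-- `P₁ ⊕ P₂` is defined: disjoint outputs and mutually respected hidden atoms. -/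
def compDefined (P₁ P₂ : NMod) : Prop :=
  P₁.O ∩ P₂.O = ∅ ∧ P₁.H ∩ P₂.hb = ∅ ∧ P₂.H ∩ P₁.hb = ∅

/-- Mutual dependence: some SCC of the positive dependency graph of `R₁ ∪ R₂`
contains output atoms of both modules. -/
def mutuallyDep (P₁ P₂ : NMod) : Prop :=
  ∃ a ∈ P₁.O, ∃ b ∈ P₂.O,
    ndep (P₁.R ∪ P₂.R) a b ∧ ndep (P₁.R ∪ P₂.R) b a

/-- The join `P₁ ⊔ P₂` is defined. -/
def joinDefined (P₁ P₂ : NMod) : Prop := compDefined P₁ P₂ ∧ ¬ mutuallyDep P₁ P₂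

/-- Least model of a positive program (a set of pairs `(head, positive body)`). -/
def lm (Q : Set (ℕ × Set ℕ)) : Set ℕ := ⋂₀ {X | ∀ p ∈ Q, p.2 ⊆ X → p.1 ∈ X}

/-- The input-aware reduct `R^{M,I}`. -/
def nreduct (R : Set NRule) (I M : Set ℕ) : Set (ℕ × Set ℕ) :=
  {p | ∃ r ∈ R, r.pos ∩ I ⊆ M ∧ r.neg ∩ M = ∅ ∧ p = (r.head, r.pos \ I)}

/-- Stable models of a module. -/
def NMod.SM (P : NMod) : Set (Set ℕ) :=
  {M | M ⊆ P.hb ∧ M \ P.I = lm (nreduct P.R P.I M)}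

/-- Compatibility of interpretations of two modules. -/
def compatible (P₁ P₂ : NMod) (M₁ M₂ : Set ℕ) : Prop :=
  M₁ ∩ P₂.vis = M₂ ∩ P₁.vis

/-- Natural join of two sets of interpretations. -/
def natJoin (P₁ P₂ : NMod) (A₁ A₂ : Set (Set ℕ)) : Set (Set ℕ) :=
  {M | ∃ M₁ ∈ A₁, ∃ M₂ ∈ A₂, compatible P₁ P₂ M₁ M₂ ∧ M = M₁ ∪ M₂}

/-- A three-literal clause: three literals, each an atom with a sign. -/
def Clause3 : Type := Fin 3 → ℕ × Bool

/-- Satisfiability of a set (list) of three-literal clauses. -/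
def satisfiable (S : List Clause3) : Prop :=
  ∃ v : ℕ → Bool, ∀ C ∈ S, ∃ j : Fin 3, v (C j).1 = (C j).2

/- Atom encoding: `d = 0`, `e = 1`, `cᵢ = 2i + 2`, variable `x` = `2x + 3`. -/
def varAtom (x : ℕ) : ℕ := 2 * x + 3
def cAtom (i : ℕ) : ℕ := 2 * i + 2

/-- The module `P₁ = ⟨{e ← d}, {d}, {e}, ∅⟩`. -/
def P1 : NMod := ⟨{⟨1, {0}, ∅⟩}, {0}, {1}, ∅⟩

/-- The rule `cᵢ ← fⱼ` for the `j`-th literal of clause `Cᵢ`. -/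
def litRule (i : ℕ) (l : ℕ × Bool) : NRule :=
  if l.2 then ⟨cAtom i, {varAtom l.1}, ∅⟩ else ⟨cAtom i, ∅, {varAtom l.1}⟩

/-- The variables occurring in `S`. -/
def varsOf (S : List Clause3) : Set ℕ :=
  {x | ∃ C ∈ S, ∃ j : Fin 3, (C j).1 = x}

/-- The module `P₂`: rules `cᵢ ← fⱼ` and `d ← e, c₁, …, cₙ`, with input
`Hb(S) ∪ {e}`, output `{d}` and hidden atoms `{c₁, …, cₙ}`. -/
def P2 (S : List Clause3) : NMod :=
  ⟨{r | ∃ i : Fin S.length, ∃ j : Fin 3, r = litRule i (S.get i j)} ∪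
     {⟨0, {1} ∪ {a | ∃ i : Fin S.length, a = cAtom i}, ∅⟩},
   (varAtom '' varsOf S) ∪ {1}, {0}, {a | ∃ i : Fin S.length, a = cAtom i}⟩

section Helpers

open Set

/-! ### Basic lemmas about least models -/

lemma lm_subset {Q : Set (ℕ × Set ℕ)} {X : Set ℕ}
    (h : ∀ p ∈ Q, p.2 ⊆ X → p.1 ∈ X) : lm Q ⊆ X :=
  Set.sInter_subset_of_mem h

lemma mem_lm {Q : Set (ℕ × Set ℕ)} {a : ℕ} :
    a ∈ lm Q ↔ ∀ X : Set ℕ, (∀ p ∈ Q, p.2 ⊆ X → p.1 ∈ X) → a ∈ X :=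
  Set.mem_sInter

lemma lm_mono {Q Q' : Set (ℕ × Set ℕ)} (h : Q ⊆ Q') : lm Q ⊆ lm Q' := by
  intro a ha
  rw [mem_lm] at ha ⊢
  intro X hX
  exact ha X (fun p hp => hX p (h hp))

lemma lm_closed {Q : Set (ℕ × Set ℕ)} {p : ℕ × Set ℕ} (hp : p ∈ Q)
    (hb : p.2 ⊆ lm Q) : p.1 ∈ lm Q := by
  rw [mem_lm]
  intro X hX
  exact hX p hp (hb.trans (lm_subset hX))

lemma lm_empty : lm (∅ : Set (ℕ × Set ℕ)) = ∅ :=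
  Set.eq_empty_of_subset_empty (lm_subset (by simp))

lemma lm_single : lm {((1 : ℕ), (∅ : Set ℕ))} = {1} := by
  apply subset_antisymm
  · apply lm_subset
    rintro p hp -
    simp only [Set.mem_singleton_iff] at hp ⊢
    rw [hp]
  · rintro a rfl
    exact lm_closed (p := (1, ∅)) rfl (Set.empty_subset _)

/-! ### Atom encoding facts -/

lemma varAtom_inj : Function.Injective varAtom := by
  intro a b h; simp only [varAtom] at h; omega

lemma varAtom_ne_zero (x : ℕ) : varAtom x ≠ 0 := by simp [varAtom]
lemma varAtom_ne_one (x : ℕ) : varAtom x ≠ 1 := by simp [varAtom]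
lemma varAtom_ne_cAtom (x i : ℕ) : varAtom x ≠ cAtom i := by simp only [varAtom, cAtom]; omega
lemma cAtom_ne_zero (i : ℕ) : cAtom i ≠ 0 := by simp [cAtom]
lemma cAtom_ne_one (i : ℕ) : cAtom i ≠ 1 := by simp [cAtom]
lemma cAtom_inj : Function.Injective cAtom := by
  intro a b h; simp only [cAtom] at h; omega

/-! ### Abbreviations for the pieces of `P2` -/

def CA (S : List Clause3) : Set ℕ := {a | ∃ i : Fin S.length, a = cAtom i}
def VA (S : List Clause3) : Set ℕ := varAtom '' varsOf S
def bigRule (S : List Clause3) : NRule := ⟨0, {1} ∪ CA S, ∅⟩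

variable {S : List Clause3}

lemma zero_not_VA : (0 : ℕ) ∉ VA S := by
  rintro ⟨x, -, h⟩; exact varAtom_ne_zero x h

lemma one_not_VA : (1 : ℕ) ∉ VA S := by
  rintro ⟨x, -, h⟩; exact varAtom_ne_one x h

lemma cAtom_not_VA (i : ℕ) : cAtom i ∉ VA S := by
  rintro ⟨x, -, h⟩; exact varAtom_ne_cAtom x i h

lemma zero_not_CA : (0 : ℕ) ∉ CA S := by
  rintro ⟨i, h⟩; exact cAtom_ne_zero i h.symm

lemma one_not_CA : (1 : ℕ) ∉ CA S := by
  rintro ⟨i, h⟩; exact cAtom_ne_one i h.symm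

lemma varAtom_not_CA (x : ℕ) : varAtom x ∉ CA S := by
  rintro ⟨i, h⟩; exact varAtom_ne_cAtom x i h

lemma P2_R : (P2 S).R =
    {r | ∃ i : Fin S.length, ∃ j : Fin 3, r = litRule i (S.get i j)} ∪ {bigRule S} := rfl

lemma P2_I : (P2 S).I = VA S ∪ {1} := rfl
lemma P2_H : (P2 S).H = CA S := rfl

lemma zero_not_I2 : (0 : ℕ) ∉ (P2 S).I := by
  rw [P2_I]; rintro (h | h)
  · exact zero_not_VA h
  · simp at h

lemma cAtom_not_I2 (i : ℕ) : cAtom i ∉ (P2 S).I := by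
  rw [P2_I]; rintro (h | h)
  · exact cAtom_not_VA i h
  · exact cAtom_ne_one i h

lemma one_mem_I2 : (1 : ℕ) ∈ (P2 S).I := by rw [P2_I]; right; rfl

lemma lit_var_mem (i : Fin S.length) (j : Fin 3) : (S.get i j).1 ∈ varsOf S :=
  ⟨S.get i, List.get_mem S i, j, rfl⟩

lemma varAtom_mem_VA {x : ℕ} (hx : x ∈ varsOf S) : varAtom x ∈ VA S :=
  ⟨x, hx, rfl⟩

lemma Icomp : (P1.comp (P2 S)).I = VA S := by
  show ((P1.I \ (P2 S).O) ∪ ((P2 S).I \ P1.O)) = VA S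
  ext a
  show a ∈ (({0} \ {0}) ∪ ((VA S ∪ {1}) \ {1}) : Set ℕ) ↔ _
  simp only [Set.mem_union, Set.mem_diff, Set.mem_singleton_iff]
  constructor
  · rintro (⟨h1, h2⟩ | ⟨(h1 | h1), h2⟩)
    · exact absurd h1 h2
    · exact h1
    · exact absurd h1 h2
  · intro h
    right
    refine ⟨Or.inl h, ?_⟩
    rintro rfl
    exact one_not_VA h

end Helpers
section Helpers2

open Set

variable {S : List Clause3}

/-- The literal `l` "fires" in interpretation `M`. -/
def fires (M : Set ℕ) (l : ℕ × Bool) : Prop := (varAtom l.1 ∈ M ↔ l.2 = true)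

/-- The reduct pairs coming from the literal rules. -/
def litPairs (S : List Clause3) (M : Set ℕ) : Set (ℕ × Set ℕ) :=
  {p | ∃ i : Fin S.length, ∃ j : Fin 3, fires M (S.get i j) ∧ p = (cAtom i, ∅)}

lemma set_diff_self {A B : Set ℕ} (h : ∀ a ∈ A, a ∉ B) : A \ B = A := by
  ext a
  simp only [Set.mem_diff, and_iff_left_iff_imp]
  exact h a

lemma set_inter_empty {A B : Set ℕ} (h : ∀ a ∈ A, a ∉ B) : A ∩ B = ∅ := by
  apply Set.eq_empty_iff_forall_notMem.mpr
  rintro a ⟨ha, hb⟩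
  exact h a ha hb

lemma litRule_false (i : ℕ) (x : ℕ) :
    litRule i (x, false) = ⟨cAtom i, ∅, {varAtom x}⟩ := by simp [litRule]

lemma litRule_true (i : ℕ) (x : ℕ) :
    litRule i (x, true) = ⟨cAtom i, {varAtom x}, ∅⟩ := by simp [litRule]

lemma litRule_cond {I M : Set ℕ} (i : ℕ) (l : ℕ × Bool) (hI : varAtom l.1 ∈ I)
    (p : ℕ × Set ℕ) :
    ((litRule i l).pos ∩ I ⊆ M ∧ (litRule i l).neg ∩ M = ∅ ∧
      p = ((litRule i l).head, (litRule i l).pos \ I))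
    ↔ (fires M l ∧ p = (cAtom i, ∅)) := by
  obtain ⟨x, b⟩ := l
  cases b
  · rw [litRule_false]
    show ((∅ : Set ℕ) ∩ I ⊆ M ∧ ({varAtom x} : Set ℕ) ∩ M = ∅ ∧
      p = (cAtom i, (∅ : Set ℕ) \ I)) ↔ _
    rw [Set.empty_inter, Set.empty_diff]
    have h2 : ({varAtom x} : Set ℕ) ∩ M = ∅ ↔ varAtom x ∉ M := by
      simp [Set.eq_empty_iff_forall_notMem]
    rw [h2]
    simp only [fires]
    simp only [Set.empty_subset, true_and, Bool.false_eq_true, iff_false]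
  · rw [litRule_true]
    show (({varAtom x} : Set ℕ) ∩ I ⊆ M ∧ (∅ : Set ℕ) ∩ M = ∅ ∧
      p = (cAtom i, ({varAtom x} : Set ℕ) \ I)) ↔ _
    rw [Set.inter_eq_left.mpr (Set.singleton_subset_iff.mpr hI),
      Set.diff_eq_empty.mpr (Set.singleton_subset_iff.mpr hI), Set.empty_inter]
    simp only [fires, Set.singleton_subset_iff]
    simp

lemma CA_inter_I2 : CA S ∩ (P2 S).I = ∅ := by
  apply Set.eq_empty_iff_forall_notMem.mpr
  rintro a ⟨⟨i, rfl⟩, h⟩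
  exact cAtom_not_I2 i h

lemma bigRule_cond_I2 {M : Set ℕ} (p : ℕ × Set ℕ) :
    ((bigRule S).pos ∩ (P2 S).I ⊆ M ∧ (bigRule S).neg ∩ M = ∅ ∧
      p = ((bigRule S).head, (bigRule S).pos \ (P2 S).I))
    ↔ ((1 : ℕ) ∈ M ∧ p = (0, CA S)) := by
  have hpos : ({1} ∪ CA S) ∩ (P2 S).I = {1} := by
    rw [Set.union_inter_distrib_right, CA_inter_I2, Set.union_empty,
      Set.inter_eq_left.mpr (Set.singleton_subset_iff.mpr one_mem_I2)]
  have hdiff : ({1} ∪ CA S) \ (P2 S).I = CA S := by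
    rw [Set.union_diff_distrib, Set.diff_eq_empty.mpr
      (Set.singleton_subset_iff.mpr one_mem_I2), Set.empty_union,
      set_diff_self (fun a ha => by rintro h; rcases ha with ⟨i, rfl⟩; exact cAtom_not_I2 i h)]
  show (({1} ∪ CA S) ∩ (P2 S).I ⊆ M ∧ (∅ : Set ℕ) ∩ M = ∅ ∧
      p = (0, ({1} ∪ CA S) \ (P2 S).I)) ↔ _
  rw [hpos, hdiff, Set.empty_inter, Set.singleton_subset_iff]
  simp

lemma bigRule_cond_VA {M : Set ℕ} (p : ℕ × Set ℕ) :
    ((bigRule S).pos ∩ VA S ⊆ M ∧ (bigRule S).neg ∩ M = ∅ ∧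
      p = ((bigRule S).head, (bigRule S).pos \ VA S))
    ↔ p = (0, {1} ∪ CA S) := by
  have hpos : ({1} ∪ CA S) ∩ VA S = ∅ := by
    apply Set.eq_empty_iff_forall_notMem.mpr
    rintro a ⟨(rfl | ⟨i, rfl⟩), h⟩
    · exact one_not_VA h
    · exact cAtom_not_VA i h
  have hdiff : ({1} ∪ CA S) \ VA S = {1} ∪ CA S := by
    apply set_diff_self
    rintro a (rfl | ⟨i, rfl⟩)
    · exact one_not_VA
    · exact cAtom_not_VA i
  show (({1} ∪ CA S) ∩ VA S ⊆ M ∧ (∅ : Set ℕ) ∩ M = ∅ ∧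
      p = (0, ({1} ∪ CA S) \ VA S)) ↔ _
  rw [hpos, hdiff, Set.empty_inter]
  simp

/-- The reduct of `P2` when `1 ∉ M`. -/
lemma reduct2_neg {M : Set ℕ} (h1 : (1 : ℕ) ∉ M) :
    nreduct (P2 S).R (P2 S).I M = litPairs S M := by
  ext p
  simp only [nreduct, Set.mem_setOf_eq, litPairs]
  constructor
  · rintro ⟨r, hr, hc⟩
    rcases hr with ⟨i, j, rfl⟩ | hr
    · exact ⟨i, j, (litRule_cond i _ (Or.inl (varAtom_mem_VA (lit_var_mem i j))) p).mp hc⟩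
    · rw [Set.mem_singleton_iff] at hr
      subst hr
      exact absurd ((bigRule_cond_I2 p).mp hc).1 h1
  · rintro ⟨i, j, hf, rfl⟩
    exact ⟨litRule i (S.get i j), Or.inl ⟨i, j, rfl⟩,
      (litRule_cond i _ (Or.inl (varAtom_mem_VA (lit_var_mem i j))) _).mpr ⟨hf, rfl⟩⟩

/-- The reduct of `P2` when `1 ∈ M`. -/
lemma reduct2_pos {M : Set ℕ} (h1 : (1 : ℕ) ∈ M) :
    nreduct (P2 S).R (P2 S).I M = litPairs S M ∪ {(0, CA S)} := by
  ext p
  simp only [nreduct, Set.mem_setOf_eq, litPairs, Set.mem_union, Set.mem_singleton_iff]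
  constructor
  · rintro ⟨r, hr, hc⟩
    rcases hr with ⟨i, j, rfl⟩ | hr
    · exact Or.inl ⟨i, j, (litRule_cond i _ (Or.inl (varAtom_mem_VA (lit_var_mem i j))) p).mp hc⟩
    · rw [Set.mem_singleton_iff] at hr
      subst hr
      exact Or.inr ((bigRule_cond_I2 p).mp hc).2
  · rintro (⟨i, j, hf, rfl⟩ | rfl)
    · exact ⟨litRule i (S.get i j), Or.inl ⟨i, j, rfl⟩,
        (litRule_cond i _ (Or.inl (varAtom_mem_VA (lit_var_mem i j))) _).mpr ⟨hf, rfl⟩⟩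
    · exact ⟨bigRule S, Or.inr rfl, (bigRule_cond_I2 _).mpr ⟨h1, rfl⟩⟩

/-- The reduct of the composition. -/
lemma reductC (M : Set ℕ) :
    nreduct (P1.comp (P2 S)).R (P1.comp (P2 S)).I M =
      litPairs S M ∪ {(1, {0}), (0, {1} ∪ CA S)} := by
  have hI : (P1.comp (P2 S)).I = VA S := Icomp
  have hR : (P1.comp (P2 S)).R = {(⟨1, {0}, ∅⟩ : NRule)} ∪
      ({r | ∃ i : Fin S.length, ∃ j : Fin 3, r = litRule i (S.get i j)} ∪ {bigRule S}) := rfl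
  have ecase : ∀ p : ℕ × Set ℕ,
      ((⟨1, {0}, ∅⟩ : NRule).pos ∩ VA S ⊆ M ∧ (⟨1, {0}, ∅⟩ : NRule).neg ∩ M = ∅ ∧
        p = ((⟨1, {0}, ∅⟩ : NRule).head, (⟨1, {0}, ∅⟩ : NRule).pos \ VA S))
      ↔ p = (1, {0}) := by
    intro p
    have hpos : ({0} : Set ℕ) ∩ VA S = ∅ := by
      apply Set.eq_empty_iff_forall_notMem.mpr
      rintro a ⟨rfl, h⟩
      exact zero_not_VA h
    have hdiff : ({0} : Set ℕ) \ VA S = {0} := by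
      apply set_diff_self
      rintro a rfl
      exact zero_not_VA
    show (({0} : Set ℕ) ∩ VA S ⊆ M ∧ (∅ : Set ℕ) ∩ M = ∅ ∧ p = (1, {0} \ VA S)) ↔ _
    rw [hpos, hdiff, Set.empty_inter]
    simp
  ext p
  simp only [nreduct, Set.mem_setOf_eq, hR, hI, Set.mem_union, Set.mem_singleton_iff,
    litPairs, Set.mem_insert_iff]
  constructor
  · rintro ⟨r, hr, hc⟩
    rcases hr with hr | ⟨i, j, rfl⟩ | hr
    · subst hr
      exact Or.inr (Or.inl ((ecase p).mp hc))
    · exact Or.inl ⟨i, j, (litRule_cond i _ (varAtom_mem_VA (lit_var_mem i j)) p).mp hc⟩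
    · subst hr
      exact Or.inr (Or.inr ((bigRule_cond_VA p).mp hc))
  · rintro (⟨i, j, hf, rfl⟩ | rfl | rfl)
    · exact ⟨litRule i (S.get i j), Or.inr (Or.inl ⟨i, j, rfl⟩),
        (litRule_cond i _ (varAtom_mem_VA (lit_var_mem i j)) _).mpr ⟨hf, rfl⟩⟩
    · exact ⟨⟨1, {0}, ∅⟩, Or.inl rfl, (ecase _).mpr rfl⟩
    · exact ⟨bigRule S, Or.inr (Or.inr rfl), (bigRule_cond_VA _).mpr rfl⟩

lemma lm_litPairs_subset_CA {M : Set ℕ} : lm (litPairs S M) ⊆ CA S := by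
  apply lm_subset
  rintro p ⟨i, j, hf, rfl⟩ -
  exact ⟨⟨i, i.2⟩, rfl⟩

end Helpers2
section Helpers3

open Set

variable {S : List Clause3}

/-! ### Stable models of `P1` -/

lemma reduct_P1_pos {M : Set ℕ} (h : (0 : ℕ) ∈ M) :
    nreduct P1.R P1.I M = {((1 : ℕ), (∅ : Set ℕ))} := by
  have e1 : (({0} : Set ℕ) ∩ {0}) = {0} := Set.inter_self _
  have e2 : (({0} : Set ℕ) \ {0}) = ∅ := Set.diff_self
  ext p
  simp only [nreduct, Set.mem_setOf_eq, Set.mem_singleton_iff]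
  constructor
  · rintro ⟨r, hr, hc⟩
    rw [show P1.R = {(⟨1, {0}, ∅⟩ : NRule)} from rfl, Set.mem_singleton_iff] at hr
    subst hr
    rw [hc.2.2]
    show ((1 : ℕ), ({0} : Set ℕ) \ {0}) = _
    rw [e2]
  · rintro rfl
    refine ⟨⟨1, {0}, ∅⟩, rfl, ?_, ?_, ?_⟩
    · show ({0} : Set ℕ) ∩ {0} ⊆ M
      rw [e1]; exact Set.singleton_subset_iff.mpr h
    · exact Set.empty_inter M
    · show _ = ((1 : ℕ), ({0} : Set ℕ) \ {0})
      rw [e2]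

lemma reduct_P1_neg {M : Set ℕ} (h : (0 : ℕ) ∉ M) :
    nreduct P1.R P1.I M = ∅ := by
  apply Set.eq_empty_iff_forall_notMem.mpr
  rintro p ⟨r, hr, hc, -⟩
  rw [show P1.R = {(⟨1, {0}, ∅⟩ : NRule)} from rfl, Set.mem_singleton_iff] at hr
  subst hr
  apply h
  apply hc
  show (0 : ℕ) ∈ ({0} : Set ℕ) ∩ {0}
  exact ⟨rfl, rfl⟩

lemma SM_P1_pair : ({0, 1} : Set ℕ) ∈ P1.SM := by
  constructor
  · rintro a (rfl | rfl)
    · exact Or.inl (Or.inl rfl)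
    · exact Or.inl (Or.inr rfl)
  · rw [reduct_P1_pos (Or.inl rfl), lm_single]
    ext a
    simp only [Set.mem_diff, Set.mem_insert_iff, Set.mem_singleton_iff]
    constructor
    · rintro ⟨(rfl | rfl), hb⟩
      · exact absurd rfl hb
      · rfl
    · rintro rfl
      exact ⟨Or.inr rfl, one_ne_zero⟩

lemma SM_P1_empty : (∅ : Set ℕ) ∈ P1.SM := by
  refine ⟨Set.empty_subset _, ?_⟩
  rw [reduct_P1_neg (Set.notMem_empty 0), lm_empty, Set.empty_diff]

lemma SM_P1_cases {M : Set ℕ} (h : M ∈ P1.SM) : M = ∅ ∨ M = {0, 1} := by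
  obtain ⟨hsub, heq⟩ := h
  by_cases h0 : (0 : ℕ) ∈ M
  · right
    rw [reduct_P1_pos h0, lm_single] at heq
    have h1 : (1 : ℕ) ∈ M := by
      have : (1 : ℕ) ∈ M \ P1.I := by rw [heq]; rfl
      exact this.1
    apply subset_antisymm
    · intro a ha
      rcases hsub ha with (h | h) | h
      · exact Or.inl h
      · exact Or.inr h
      · exact absurd h (Set.notMem_empty a)
    · rintro a (rfl | rfl)
      · exact h0
      · exact h1
  · left
    rw [reduct_P1_neg h0, lm_empty] at heq
    apply Set.eq_empty_iff_forall_notMem.mpr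
    intro a ha
    by_cases hI : a ∈ P1.I
    · rw [show P1.I = {0} from rfl, Set.mem_singleton_iff] at hI
      subst hI
      exact h0 ha
    · exact (heq ▸ (⟨ha, hI⟩ : a ∈ M \ P1.I) : a ∈ (∅ : Set ℕ))

/-! ### Compatibility with `{0, 1}` -/

lemma compat01 {M : Set ℕ} :
    compatible P1 (P2 S) {0, 1} M ↔ ((0 : ℕ) ∈ M ∧ (1 : ℕ) ∈ M) := by
  unfold compatible
  constructor
  · intro h
    have h0 : (0 : ℕ) ∈ ({0, 1} : Set ℕ) ∩ (P2 S).vis := ⟨Or.inl rfl, Or.inr rfl⟩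
    have h1 : (1 : ℕ) ∈ ({0, 1} : Set ℕ) ∩ (P2 S).vis := ⟨Or.inr rfl, Or.inl one_mem_I2⟩
    rw [h] at h0 h1
    exact ⟨h0.1, h1.1⟩
  · rintro ⟨h0, h1⟩
    ext a
    constructor
    · rintro ⟨(rfl | rfl), -⟩
      · exact ⟨h0, Or.inl rfl⟩
      · exact ⟨h1, Or.inr rfl⟩
    · rintro ⟨ha, (h | h)⟩
      · obtain rfl : a = 0 := h
        exact ⟨Or.inl rfl, Or.inr rfl⟩
      · obtain rfl : a = 1 := h
        exact ⟨Or.inr rfl, Or.inl one_mem_I2⟩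

/-! ### Transfer between `SM(P1 ⊕ P2)` and `SM(P2)` -/

lemma hb_comp_eq : (P1.comp (P2 S)).hb = (P2 S).hb := by
  show (P1.comp (P2 S)).I ∪ (P1.comp (P2 S)).O ∪ (P1.comp (P2 S)).H = _
  rw [Icomp]
  show VA S ∪ ({1} ∪ {0}) ∪ (∅ ∪ CA S) = (VA S ∪ {1}) ∪ {0} ∪ CA S
  ext a
  simp only [Set.mem_union]
  tauto

lemma SM_transfer {N : Set ℕ} (h0 : (0 : ℕ) ∉ N) (h1 : (1 : ℕ) ∉ N) :
    N ∈ (P1.comp (P2 S)).SM ↔ N ∈ (P2 S).SM := by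
  have hdiff : N \ (P1.comp (P2 S)).I = N \ (P2 S).I := by
    rw [Icomp, P2_I]
    ext a
    simp only [Set.mem_diff, Set.mem_union, Set.mem_singleton_iff]
    constructor
    · rintro ⟨ha, hv⟩
      refine ⟨ha, ?_⟩
      rintro (h | rfl)
      · exact hv h
      · exact h1 ha
    · rintro ⟨ha, hv⟩
      exact ⟨ha, fun h => hv (Or.inl h)⟩
  have hlm : lm (nreduct (P1.comp (P2 S)).R (P1.comp (P2 S)).I N) =
      lm (nreduct (P2 S).R (P2 S).I N) := by
    rw [reductC, reduct2_neg h1]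
    apply subset_antisymm
    · apply lm_subset
      rintro p (hp | hp) hsub
      · exact lm_closed hp hsub
      · rcases hp with rfl | hp
        · exact absurd (lm_litPairs_subset_CA (hsub rfl)) zero_not_CA
        · rw [Set.mem_singleton_iff] at hp
          subst hp
          exact absurd (lm_litPairs_subset_CA (hsub (Or.inl rfl))) one_not_CA
    · exact lm_mono Set.subset_union_left
  show (N ⊆ _ ∧ _) ↔ (N ⊆ _ ∧ _)
  rw [hb_comp_eq, hdiff, hlm]

/-! ### No stable model of the composition contains `0` or `1` -/

lemma comp_SM_no01 {N : Set ℕ} (h : N ∈ (P1.comp (P2 S)).SM) :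
    (0 : ℕ) ∉ N ∧ (1 : ℕ) ∉ N := by
  obtain ⟨-, heq⟩ := h
  rw [reductC] at heq
  have hX : lm (litPairs S N ∪ {(1, {0}), (0, {1} ∪ CA S)}) ⊆
      {a : ℕ | a ≠ 0 ∧ a ≠ 1} := by
    apply lm_subset
    rintro p (⟨i, j, hf, rfl⟩ | hp) hsub
    · exact ⟨cAtom_ne_zero i, cAtom_ne_one i⟩
    · rcases hp with rfl | hp
      · exact absurd (hsub rfl) (fun hc => hc.1 rfl)
      · rw [Set.mem_singleton_iff] at hp
        subst hp
        exact absurd (hsub (Or.inl rfl)) (fun hc => hc.2 rfl)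
  constructor
  · intro h0
    have hin : (0 : ℕ) ∈ N \ (P1.comp (P2 S)).I := ⟨h0, by rw [Icomp]; exact zero_not_VA⟩
    rw [heq] at hin
    exact (hX hin).1 rfl
  · intro h1
    have hin : (1 : ℕ) ∈ N \ (P1.comp (P2 S)).I := ⟨h1, by rw [Icomp]; exact one_not_VA⟩
    rw [heq] at hin
    exact (hX hin).2 rfl

end Helpers3
section Helpers4

open Set

variable {S : List Clause3}

/-- From a satisfying assignment, build a stable model of `P2` containing `0` and `1`. -/
lemma SM_of_sat (v : ℕ → Bool) (hv : ∀ C ∈ S, ∃ j : Fin 3, v (C j).1 = (C j).2) :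
    ∃ M ∈ (P2 S).SM, (0 : ℕ) ∈ M ∧ (1 : ℕ) ∈ M := by
  set M : Set ℕ :=
    {0, 1} ∪ (varAtom '' {x | x ∈ varsOf S ∧ v x = true}) ∪ CA S with hMdef
  have h0 : (0 : ℕ) ∈ M := Or.inl (Or.inl (Or.inl rfl))
  have h1 : (1 : ℕ) ∈ M := Or.inl (Or.inl (Or.inr rfl))
  have hfires : ∀ (i : Fin S.length) (j : Fin 3),
      v ((S.get i) j).1 = ((S.get i) j).2 → fires M ((S.get i) j) := by
    intro i j hj
    have hvar : ((S.get i) j).1 ∈ varsOf S := lit_var_mem i j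
    unfold fires
    cases hb : ((S.get i) j).2
    · rw [hb] at hj
      simp only [Bool.false_eq_true, iff_false]
      rintro (((h | h) | ⟨x, ⟨-, hx⟩, he⟩) | h)
      · exact varAtom_ne_zero _ h
      · exact varAtom_ne_one _ h
      · obtain rfl := varAtom_inj he
        rw [hx] at hj
        exact Bool.false_ne_true hj.symm
      · exact varAtom_not_CA _ h
    · rw [hb] at hj
      simp only [iff_true]
      exact Or.inl (Or.inr ⟨((S.get i) j).1, ⟨hvar, hj⟩, rfl⟩)
  refine ⟨M, ⟨?_, ?_⟩, h0, h1⟩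
  · rintro a (((rfl | rfl) | ⟨x, ⟨hx, -⟩, rfl⟩) | hca)
    · exact Or.inl (Or.inr rfl)
    · exact Or.inl (Or.inl (Or.inr rfl))
    · exact Or.inl (Or.inl (Or.inl (varAtom_mem_VA hx)))
    · exact Or.inr hca
  · rw [reduct2_pos h1]
    have hdiff : M \ (P2 S).I = {0} ∪ CA S := by
      ext a
      constructor
      · rintro ⟨((rfl | rfl) | ⟨x, ⟨hx, -⟩, rfl⟩) | hca, hni⟩
        · exact Or.inl rfl
        · exact absurd one_mem_I2 hni
        · exact absurd (Or.inl (varAtom_mem_VA hx)) hni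
        · exact Or.inr hca
      · rintro (rfl | hca)
        · exact ⟨h0, zero_not_I2⟩
        · refine ⟨Or.inr hca, ?_⟩
          obtain ⟨i, rfl⟩ := hca
          exact cAtom_not_I2 i
    rw [hdiff]
    have hCAlm : CA S ⊆ lm (litPairs S M ∪ {(0, CA S)}) := by
      rintro a ⟨i, rfl⟩
      obtain ⟨j, hj⟩ := hv (S.get i) (List.get_mem S i)
      exact lm_closed (p := (cAtom i, ∅)) (Or.inl ⟨i, j, hfires i j hj, rfl⟩)
        (Set.empty_subset _)
    apply subset_antisymm
    · rintro a (rfl | hca)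
      · exact lm_closed (p := ((0 : ℕ), CA S)) (Or.inr rfl) hCAlm
      · exact hCAlm hca
    · apply lm_subset
      rintro p (⟨i, j, hf, rfl⟩ | hp) -
      · exact Or.inr ⟨i, rfl⟩
      · rw [Set.mem_singleton_iff] at hp
        subst hp
        exact Or.inl rfl

/-- From a stable model of `P2` containing `0` and `1`, extract satisfiability. -/
lemma sat_of_SM {M : Set ℕ} (hM : M ∈ (P2 S).SM) (h0 : (0 : ℕ) ∈ M)
    (h1 : (1 : ℕ) ∈ M) : satisfiable S := by
  classical
  obtain ⟨-, heq⟩ := hM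
  rw [reduct2_pos h1] at heq
  refine ⟨fun x => decide (varAtom x ∈ M), ?_⟩
  intro C hC
  by_contra hno
  push_neg at hno
  obtain ⟨i, hi⟩ := List.mem_iff_get.mp hC
  subst hi
  have h0lm : (0 : ℕ) ∈ lm (litPairs S M ∪ {(0, CA S)}) := by
    rw [← heq]
    exact ⟨h0, zero_not_I2⟩
  have hX : lm (litPairs S M ∪ {(0, CA S)}) ⊆ {a : ℕ | a ≠ 0 ∧ a ≠ cAtom i} := by
    apply lm_subset
    rintro p (⟨i', j, hf, rfl⟩ | hp) hsub
    · refine ⟨cAtom_ne_zero i', ?_⟩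
      intro hc
      have hii : (i' : ℕ) = (i : ℕ) := cAtom_inj hc
      have hgg : S.get i' = S.get i := by
        congr 1
        exact Fin.ext hii
      rw [hgg] at hf
      apply hno j
      unfold fires at hf
      cases hb : ((S.get i) j).2
      · rw [hb] at hf
        simp only [Bool.false_eq_true, iff_false] at hf
        exact decide_eq_false hf
      · rw [hb] at hf
        simp only [iff_true] at hf
        exact decide_eq_true hf
    · rw [Set.mem_singleton_iff] at hp
      subst hp
      exact absurd rfl (hsub ⟨i, rfl⟩).2
  exact (hX h0lm).1 rfl

end Helpers4
/-- correctness of the reduction: `S` is satisfiable iff some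
stable model of `P₂` is compatible with the stable model `{d, e}` of `P₁`, and
`S` is unsatisfiable iff `SM(P₁ ⊕ P₂) = SM(P₁) ⋈ SM(P₂)`. -/
theorem reduction_correct (S : List Clause3) :
    ({0, 1} : Set ℕ) ∈ P1.SM ∧
    (∀ N ∈ (P1.comp (P2 S)).SM, (0 : ℕ) ∉ N ∧ (1 : ℕ) ∉ N) ∧
    (satisfiable S ↔ ∃ M ∈ (P2 S).SM, compatible P1 (P2 S) {0, 1} M) ∧
    (¬ satisfiable S ↔
      (P1.comp (P2 S)).SM = natJoin P1 (P2 S) P1.SM (P2 S).SM) := by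
  refine ⟨SM_P1_pair, fun N hN => comp_SM_no01 hN, ?_, ?_⟩
  · constructor
    · rintro ⟨v, hv⟩
      obtain ⟨M, hM, h0, h1⟩ := SM_of_sat v hv
      exact ⟨M, hM, compat01.mpr ⟨h0, h1⟩⟩
    · rintro ⟨M, hM, hc⟩
      obtain ⟨h0, h1⟩ := compat01.mp hc
      exact sat_of_SM hM h0 h1
  · constructor
    · intro hunsat
      ext N
      constructor
      · intro hN
        obtain ⟨h0, h1⟩ := comp_SM_no01 hN
        refine ⟨∅, SM_P1_empty, N, (SM_transfer h0 h1).mp hN, ?_, (Set.empty_union N).symm⟩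
        show (∅ : Set ℕ) ∩ _ = N ∩ P1.vis
        rw [Set.empty_inter]
        symm
        apply Set.eq_empty_iff_forall_notMem.mpr
        rintro a ⟨ha, (h | h)⟩
        · obtain rfl : a = 0 := h
          exact h0 ha
        · obtain rfl : a = 1 := h
          exact h1 ha
      · rintro ⟨M₁, hM₁, M₂, hM₂, hc, rfl⟩
        rcases SM_P1_cases hM₁ with rfl | rfl
        · rw [Set.empty_union]
          have hcomp : (∅ : Set ℕ) ∩ (P2 S).vis = M₂ ∩ P1.vis := hc
          rw [Set.empty_inter] at hcomp
          have h0 : (0 : ℕ) ∉ M₂ := by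
            intro h
            exact (hcomp ▸ (⟨h, Or.inl rfl⟩ : (0 : ℕ) ∈ M₂ ∩ P1.vis) : (0 : ℕ) ∈ (∅ : Set ℕ))
          have h1 : (1 : ℕ) ∉ M₂ := by
            intro h
            exact (hcomp ▸ (⟨h, Or.inr rfl⟩ : (1 : ℕ) ∈ M₂ ∩ P1.vis) : (1 : ℕ) ∈ (∅ : Set ℕ))
          exact (SM_transfer h0 h1).mpr hM₂
        · obtain ⟨h0, h1⟩ := compat01.mp hc
          exact absurd (sat_of_SM hM₂ h0 h1) hunsat
    · intro heq hsat
      obtain ⟨v, hv⟩ := hsat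
      obtain ⟨M, hM, h0, h1⟩ := SM_of_sat v hv
      have hmem : ({0, 1} ∪ M) ∈ (P1.comp (P2 S)).SM := by
        rw [heq]
        exact ⟨{0, 1}, SM_P1_pair, M, hM, compat01.mpr ⟨h0, h1⟩, rfl⟩
      exact (comp_SM_no01 hmem).1 (Or.inl (Or.inl rfl))
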